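/- Consider the finite-horizon optimal control setup with dynamics f, stage cost l, terminal cost V_f, input constraint set 𝒰, horizon N, predicted states ξ_k(x,μ), running cost h(x,μ), and value function V(x) = inf_{μ ∈ 𝒰^N} h(x,μ) as defined below. Suppose κ is a terminal controller on a set X_f ⊆ ℝ^{n_x}, i.e., for all z ∈ X_f: κ(z) ∈ 𝒰, f(z,κ(z)) ∈ X_f, and V_f(f(z,κ(z))) ≤ V_f(z) − l(z,κ(z)). Then for every x ∈ X_f, V(x) ≤ V_f(x). -/

import Mathlib

/-- Predicted states: `xi f x μ 0 = x` and `xi f x μ (k+1) = f (xi f x μ k) (μ k)`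
for `k < N` (constant afterwards). -/
def xi {X U : Type*} {N : ℕ} (f : X → U → X) (x : X) (μ : Fin N → U) : ℕ → X
  | 0 => x
  | k + 1 => if h : k < N then f (xi f x μ k) (μ ⟨k, h⟩) else xi f x μ k

/-- Running cost `h(x,μ) = ∑_{k=0}^{N-1} l(ξ_k(x,μ), μ_k) + V_f(ξ_N(x,μ))`. -/
def cost {X U : Type*} {N : ℕ} (f : X → U → X) (l : X → U → ℝ) (Vf : X → ℝ)
    (x : X) (μ : Fin N → U) : ℝ :=
  (∑ k : Fin N, l (xi f x μ k.val) (μ k)) + Vf (xi f x μ N)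

/-- Closed-loop trajectory under terminal controller. -/
def traj {X U : Type*} (f : X → U → X) (κ : X → U) (x : X) : ℕ → X
  | 0 => x
  | k + 1 => f (traj f κ x k) (κ (traj f κ x k))

/-- **Terminal cost bounds value function on the terminal set.**
With `V(z) = inf_{μ ∈ 𝒰^N} h(z,μ)` (as the greatest lower bound) and a terminal
controller `κ` on `Xf`, for every `x ∈ Xf` one has `V(x) ≤ V_f(x)`. -/
theorem stmt6 {nx nu N : ℕ} (hN : 0 < N)
    (f : (Fin nx → ℝ) → (Fin nu → ℝ) → (Fin nx → ℝ))
    (l : (Fin nx → ℝ) → (Fin nu → ℝ) → ℝ) (Vf : (Fin nx → ℝ) → ℝ)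
    (Uset : Set (Fin nu → ℝ)) (hUne : Uset.Nonempty) (hUcl : IsClosed Uset)
    (hUcv : Convex ℝ Uset)
    (Xf : Set (Fin nx → ℝ)) (κ : (Fin nx → ℝ) → (Fin nu → ℝ))
    (hκ : ∀ z ∈ Xf, κ z ∈ Uset ∧ f z (κ z) ∈ Xf ∧
      Vf (f z (κ z)) ≤ Vf z - l z (κ z))
    (V : (Fin nx → ℝ) → ℝ)
    (hV : ∀ z : Fin nx → ℝ,
      IsGLB {r : ℝ | ∃ μ : Fin N → (Fin nu → ℝ),
        (∀ k, μ k ∈ Uset) ∧ cost f l Vf z μ = r} (V z))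
    (x : Fin nx → ℝ) (hx : x ∈ Xf) :
    V x ≤ Vf x := by
  set z := traj f κ x with hz
  have hmem : ∀ k, z k ∈ Xf := by
    intro k
    induction k with
    | zero => exact hx
    | succ k ih => exact (hκ _ ih).2.1
  set μ : Fin N → (Fin nu → ℝ) := fun k => κ (z k.val) with hμ
  have hxi : ∀ k, k ≤ N → xi f x μ k = z k := by
    intro k hk
    induction k with
    | zero => rfl
    | succ k ih =>
      have hk' : k < N := hk
      simp only [xi, dif_pos hk', ih (le_of_lt hk'), hμ]
      exact (congrArg (fun y => f y (κ (z k))) (ih (le_of_lt hk'))).trans rfl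
  -- telescoping
  have htel : ∀ m, (∑ k ∈ Finset.range m, l (z k) (κ (z k))) + Vf (z m) ≤ Vf x := by
    intro m
    induction m with
    | zero => simp [hz, traj]
    | succ m ih =>
      rw [Finset.sum_range_succ]
      have hd := (hκ _ (hmem m)).2.2
      have : Vf (z (m + 1)) ≤ Vf (z m) - l (z m) (κ (z m)) := hd
      linarith
  have hcost : cost f l Vf x μ ≤ Vf x := by
    have hsum : (∑ k : Fin N, l (xi f x μ k.val) (μ k))
        = ∑ k ∈ Finset.range N, l (z k) (κ (z k)) := by
      rw [Finset.sum_range fun k => l (z k) (κ (z k))]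
      refine Finset.sum_congr rfl fun k _ => ?_
      rw [hxi k.val (le_of_lt k.isLt)]
    rw [cost, hsum, hxi N le_rfl]
    exact htel N
  have hVx := (hV x).1
  have : V x ≤ cost f l Vf x μ :=
    hVx ⟨μ, fun k => (hκ _ (hmem k.val)).1, rfl⟩
  linarith
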